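/- arXiv:math/0001187 — 2 statements merged into one kernel-verified Lean document; each statement's English description precedes it below -/
import Mathlib

section
/- For all n ≥ 0 and all p, the q-binomial probabilities sum to one: ∑_{κ=0}^{n} [n choose κ]_q · p^κ · ∏_{i=0}^{n-κ-1}(1 - p q^i) = 1. -/
/-- The `q`-analog `[n]_q = 1 + q + ⋯ + q^(n-1) = (q^n - 1)/(q - 1)` of a natural number. -/
def qNum {R : Type*} [CommRing R] (q : R) (n : ℕ) : R := ∑ i ∈ Finset.range n, q ^ i

/-- The `q`-factorial `[n]! = [1][2]⋯[n]`. -/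
def qFact {R : Type*} [CommRing R] (q : R) (n : ℕ) : R := ∏ i ∈ Finset.range n, qNum q (i + 1)

/-- The Gaussian (`q`-)binomial coefficient, via the `q`-Pascal recursion. -/
def qBinom {R : Type*} [CommRing R] (q : R) : ℕ → ℕ → R
  | _, 0 => 1
  | 0, _ + 1 => 0
  | n + 1, k + 1 => qBinom q n k + q ^ (k + 1) * qBinom q n (k + 1)

/-- The `q`-shifted product `(1 −· p)^m = ∏_{i=0}^{m-1} (1 - p q^i)`. -/
def qProdSub {R : Type*} [CommRing R] (q p : R) (m : ℕ) : R :=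
  ∏ i ∈ Finset.range m, (1 - p * q ^ i)

lemma qBinom_eq_zero {R : Type*} [CommRing R] (q : R) :
    ∀ n k : ℕ, n < k → qBinom q n k = 0 := by
  intro n
  induction n with
  | zero =>
    intro k hk
    match k, hk with
    | k + 1, _ => rfl
  | succ n ih =>
    intro k hk
    match k, hk with
    | k + 1, hk =>
      show qBinom q n k + q ^ (k + 1) * qBinom q n (k + 1) = 0
      rw [ih k (by omega), ih (k + 1) (by omega)]
      ring

/-- The q-binomial probabilities sum to one:
`∑_{κ=0}^{n} [n choose κ]_q p^κ (1 −· p)^{n-κ} = 1`. -/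
theorem qBernoulli_sum_eq_one {R : Type*} [CommRing R] (q p : R) (n : ℕ) :
    ∑ κ ∈ Finset.range (n + 1), qBinom q n κ * p ^ κ * qProdSub q p (n - κ) = 1 := by
  induction n generalizing p with
  | zero => simp [qBinom, qProdSub]
  | succ n ih =>
    have hP : ∀ m : ℕ, qProdSub q p (m + 1) = (1 - p) * qProdSub q (p * q) m := by
      intro m
      rw [qProdSub, qProdSub, Finset.prod_range_succ', mul_comm]
      congr 1
      · simp
      · exact Finset.prod_congr rfl fun i _ => by ring
    rw [Finset.sum_range_succ']
    have h0 : qBinom q (n + 1) 0 * p ^ 0 * qProdSub q p (n + 1 - 0) =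
        (1 - p) * qProdSub q (p * q) n := by
      have h1 : qBinom q (n + 1) 0 = 1 := rfl
      simpa [h1] using hP n
    rw [h0]
    have hsplit : ∀ κ ∈ Finset.range (n + 1),
        qBinom q (n + 1) (κ + 1) * p ^ (κ + 1) * qProdSub q p (n + 1 - (κ + 1))
          = p * (qBinom q n κ * p ^ κ * qProdSub q p (n - κ))
            + q ^ (κ + 1) * qBinom q n (κ + 1) * p ^ (κ + 1) * qProdSub q p (n - κ) := by
      intro κ _
      have hnk : n + 1 - (κ + 1) = n - κ := by omega
      rw [hnk]
      show (qBinom q n κ + q ^ (κ + 1) * qBinom q n (κ + 1)) * p ^ (κ + 1) *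
        qProdSub q p (n - κ) = _
      ring
    rw [Finset.sum_congr rfl hsplit, Finset.sum_add_distrib, ← Finset.mul_sum, ih p]
    have hB : ∑ κ ∈ Finset.range (n + 1),
        q ^ (κ + 1) * qBinom q n (κ + 1) * p ^ (κ + 1) * qProdSub q p (n - κ)
        = (1 - p) * ∑ κ ∈ Finset.range n,
            qBinom q n (κ + 1) * (p * q) ^ (κ + 1) * qProdSub q (p * q) (n - (κ + 1)) := by
      rw [Finset.sum_range_succ, qBinom_eq_zero q n (n + 1) (by omega), Finset.mul_sum]
      simp only [mul_zero, zero_mul, add_zero]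
      refine Finset.sum_congr rfl fun κ hκ => ?_
      have hκ' : κ < n := Finset.mem_range.mp hκ
      have hnk : n - κ = (n - (κ + 1)) + 1 := by omega
      rw [hnk, hP]
      ring
    rw [hB]
    have hrest : ∑ κ ∈ Finset.range n,
        qBinom q n (κ + 1) * (p * q) ^ (κ + 1) * qProdSub q (p * q) (n - (κ + 1))
        = 1 - qProdSub q (p * q) n := by
      have h := ih (p * q)
      rw [Finset.sum_range_succ'] at h
      have h0' : qBinom q n 0 * (p * q) ^ 0 * qProdSub q (p * q) (n - 0) =
          qProdSub q (p * q) n := by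
        have h1 : qBinom q n 0 = 1 := by cases n <;> rfl
        simp [h1]
      rw [h0'] at h
      linear_combination h
    rw [hrest]
    ring
end

section
/- The mean of the q-Bernoulli distribution: ∑_{κ=0}^{n} [κ]_q [n choose κ]_q p^κ ∏_{i=0}^{n-κ-1}(1 - p q^i) = [n]_q · p. -/
/-- The `q`-shifted power `(x +· y)^m = ∏_{i=0}^{m-1} (x + q^i y)`. -/
def qProdAdd {R : Type*} [CommRing R] (q x y : R) (m : ℕ) : R :=
  ∏ i ∈ Finset.range m, (x + q ^ i * y)
section aux
variable {R : Type*} [CommRing R] (q : R)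

lemma qBinom_zero_right (n : ℕ) : qBinom q n 0 = 1 := by cases n <;> rfl

lemma qBinom_succ_succ (n k : ℕ) :
    qBinom q (n+1) (k+1) = qBinom q n k + q ^ (k + 1) * qBinom q n (k + 1) := rfl

lemma qBinom_zero_succ (k : ℕ) : qBinom q 0 (k+1) = 0 := rfl

lemma qBinom_of_lt : ∀ n k, n < k → qBinom q n k = 0 := by
  intro n
  induction n with
  | zero => intro k hk; match k, hk with | (j+1), _ => rfl
  | succ m ih =>
    intro k hk
    match k, hk with
    | (j+1), hk =>
      rw [qBinom_succ_succ, ih j (by omega), ih (j+1) (by omega)]; ring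

lemma qNum_mul_sub (m : ℕ) : (q - 1) * qNum q m = q ^ m - 1 := by
  rw [qNum, mul_comm]; exact geom_sum_mul q m

lemma qBinom_key : ∀ n k, (q ^ (k+1) - 1) * qBinom q (n+1) (k+1)
    = (q ^ (n+1) - 1) * qBinom q n k := by
  intro n
  induction n with
  | zero =>
    intro k
    cases k with
    | zero =>
      simp [qBinom_succ_succ, qBinom_zero_right, qBinom_zero_succ]
    | succ j =>
      rw [qBinom_succ_succ, qBinom_zero_succ, qBinom_zero_succ]
      ring
  | succ m ih =>
    intro k
    cases k with
    | zero =>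
      have h0' : (q^(0+1)-1) * qBinom q (m+1) (0+1) = (q^(m+1)-1) * qBinom q m 0 := ih 0
      rw [qBinom_zero_right] at h0'
      rw [show qBinom q (m+1+1) (0+1) = qBinom q (m+1) 0 + q^(0+1) * qBinom q (m+1) (0+1) from rfl,
        qBinom_zero_right]
      linear_combination q * h0'
    | succ j =>
      have h1 := ih (j+1)
      have h2 := ih j
      have hp := qBinom_succ_succ q m j
      rw [qBinom_succ_succ q (m+1) (j+1)]
      linear_combination q^(j+2) * h1 + q * h2 + (q - q^(m+2)) * hp
end aux

section aux2
variable {R : Type*} [CommRing R] (q : R)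

lemma qProdSub_succ' (p : R) (r : ℕ) :
    qProdSub q p (r+1) = (1 - p) * qProdSub q (p*q) r := by
  rw [qProdSub, Finset.prod_range_succ', qProdSub, pow_zero, mul_one, mul_comm]
  congr 1
  exact Finset.prod_congr rfl fun i _ => by rw [pow_succ]; ring

lemma qNorm : ∀ (m : ℕ) (p : R),
    ∑ κ ∈ Finset.range (m+1), qBinom q m κ * p^κ * qProdSub q p (m-κ) = 1 := by
  intro m
  induction m with
  | zero => intro p; simp [qBinom_zero_right, qProdSub]
  | succ m ih =>
    intro p
    have hT : ∑ κ ∈ Finset.range (m+2),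
        q^κ * qBinom q m κ * p^κ * qProdSub q p (m+1-κ) = 1 - p := by
      rw [Finset.sum_range_succ, qBinom_of_lt q m (m+1) (by omega)]
      have he : ∀ κ ∈ Finset.range (m+1), q^κ * qBinom q m κ * p^κ * qProdSub q p (m+1-κ)
          = (1-p) * (qBinom q m κ * (p*q)^κ * qProdSub q (p*q) (m-κ)) := by
        intro κ hκ
        rw [Finset.mem_range] at hκ
        rw [show m+1-κ = (m-κ)+1 by omega, qProdSub_succ', mul_pow]
        ring
      rw [Finset.sum_congr rfl he, ← Finset.mul_sum, ih (p*q)]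
      ring
    rw [Finset.sum_range_succ'] at hT ⊢
    simp only [Nat.succ_sub_succ, Nat.sub_zero, pow_zero, one_mul, mul_one,
      qBinom_zero_right] at hT ⊢
    have he2 : ∀ j ∈ Finset.range (m+1),
        qBinom q (m+1) (j+1) * p^(j+1) * qProdSub q p (m-j)
          = p * (qBinom q m j * p^j * qProdSub q p (m-j))
            + q^(j+1) * qBinom q m (j+1) * p^(j+1) * qProdSub q p (m-j) := by
      intro j _
      rw [qBinom_succ_succ, pow_succ]
      ring
    rw [Finset.sum_congr rfl he2, Finset.sum_add_distrib, ← Finset.mul_sum, ih p]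
    linear_combination hT
end aux2

lemma qNum_zero {R : Type*} [CommRing R] (q : R) : qNum q 0 = 0 := rfl

lemma qNum_mul_qBinom {F : Type*} [Field F] (q : F) (hq : q ≠ 1) (m j : ℕ) :
    qNum q (j+1) * qBinom q (m+1) (j+1) = qNum q (m+1) * qBinom q m j := by
  have hq1 : q - 1 ≠ 0 := sub_ne_zero.mpr hq
  refine mul_left_cancel₀ hq1 ?_
  rw [← mul_assoc, ← mul_assoc, qNum_mul_sub, qNum_mul_sub, qBinom_key]


/-- Mean of the q-Bernoulli distribution (2.17):
`∑_{κ=0}^n [κ] [n choose κ] p^κ (1 −· p)^{n-κ} = [n] p`. -/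
theorem qBernoulli_mean {F : Type*} [Field F] (q p : F) (hq : q ≠ 1) (n : ℕ) :
    ∑ κ ∈ Finset.range (n + 1), qNum q κ * qBinom q n κ * p ^ κ * qProdSub q p (n - κ) =
      qNum q n * p := by
  cases n with
  | zero => simp [qNum_zero]
  | succ m =>
    rw [Finset.sum_range_succ']
    simp only [Nat.succ_sub_succ, qNum_zero, zero_mul]
    have he : ∀ j ∈ Finset.range (m+1),
        qNum q (j+1) * qBinom q (m+1) (j+1) * p^(j+1) * qProdSub q p (m-j)
          = (qNum q (m+1) * p) * (qBinom q m j * p^j * qProdSub q p (m-j)) := by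
      intro j _
      rw [qNum_mul_qBinom q hq, pow_succ]
      ring
    rw [Finset.sum_congr rfl he, ← Finset.mul_sum, qNorm]
    ring
end
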